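/- Let q ∈ ℝ and let ABC be a positively oriented triangle with shape invariant φ = (A + ρ²B + ρ⁴C)/(A + ρ⁴B + ρ²C) ≠ 0, where ρ = e^{πi/3}. Let A'' = qB + (1-q)C, B'' = qC + (1-q)A, C'' = qA + (1-q)B (the q-equidivision operation). If A'' + ρ⁴B'' + ρ²C'' ≠ 0, then the shape invariant φ'' of triangle A''B''C'' satisfies φ'' = e^{iθ}φ with θ = 2·arctan(√3(2q-1)); in particular |φ''| = |φ|. -/

import Mathlib

open Complex

noncomputable def rho : ℂ := Complex.exp ((Real.pi : ℂ) * Complex.I / 3)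

/-- The q-equidivision operation rotates the shape invariant phi by 2 arctan(√3(2q-1)). -/
theorem stmt_19 (q : ℝ) (A B C : ℂ)
    (horient : 0 < ((C - A) / (B - A)).im)
    (hden : A + rho ^ 4 * B + rho ^ 2 * C ≠ 0)
    (hphi : (A + rho ^ 2 * B + rho ^ 4 * C) / (A + rho ^ 4 * B + rho ^ 2 * C) ≠ 0)
    (A'' B'' C'' : ℂ)
    (hA : A'' = (q : ℂ) * B + (1 - (q : ℂ)) * C)
    (hB : B'' = (q : ℂ) * C + (1 - (q : ℂ)) * A)
    (hC : C'' = (q : ℂ) * A + (1 - (q : ℂ)) * B)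
    (hden'' : A'' + rho ^ 4 * B'' + rho ^ 2 * C'' ≠ 0) :
    (A'' + rho ^ 2 * B'' + rho ^ 4 * C'') / (A'' + rho ^ 4 * B'' + rho ^ 2 * C'') =
      Complex.exp (((2 * Real.arctan (Real.sqrt 3 * (2 * q - 1)) : ℝ) : ℂ) * Complex.I) *
        ((A + rho ^ 2 * B + rho ^ 4 * C) / (A + rho ^ 4 * B + rho ^ 2 * C)) ∧
    ‖(A'' + rho ^ 2 * B'' + rho ^ 4 * C'') / (A'' + rho ^ 4 * B'' + rho ^ 2 * C'')‖ =
      ‖(A + rho ^ 2 * B + rho ^ 4 * C) / (A + rho ^ 4 * B + rho ^ 2 * C)‖ := by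
  set t : ℝ := Real.sqrt 3 * (2 * q - 1) with ht_def
  -- explicit value of rho
  have hrho : rho = 1 / 2 + ((Real.sqrt 3 : ℂ) / 2) * I := by
    have h1 : (Real.pi : ℂ) * Complex.I / 3 = ((Real.pi / 3 : ℝ) : ℂ) * I := by
      push_cast; ring
    rw [rho, h1, Complex.exp_mul_I, ← Complex.ofReal_cos, ← Complex.ofReal_sin]
    rw [Real.cos_pi_div_three, Real.sin_pi_div_three]
    push_cast; ring
  have hu : ((Real.sqrt 3 : ℂ) * I) ^ 2 = -3 := by
    have h3 : ((Real.sqrt 3 : ℂ)) ^ 2 = 3 := by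
      rw [← Complex.ofReal_pow, Real.sq_sqrt (by norm_num : (3:ℝ) ≥ 0)]
      norm_num
    rw [mul_pow, h3, Complex.I_sq]; ring
  have hr2 : rho ^ 2 = (-1 + (Real.sqrt 3 : ℂ) * I) / 2 := by
    rw [hrho]; linear_combination hu / 4
  have hr4 : rho ^ 4 = (-1 - (Real.sqrt 3 : ℂ) * I) / 2 := by
    have : rho ^ 4 = (rho ^ 2) ^ 2 := by ring
    rw [this, hr2]; linear_combination hu / 4
  have hN : A'' + rho ^ 2 * B'' + rho ^ 4 * C'' =
      (-(1 + (t : ℂ) * I) / 2) * (A + rho ^ 2 * B + rho ^ 4 * C) := by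
    subst hA hB hC
    rw [hr2, hr4, ht_def]
    push_cast
    linear_combination ((2 * (q : ℂ) - 1) * (B - C) / 4) * hu
  have hD : A'' + rho ^ 4 * B'' + rho ^ 2 * C'' =
      (-(1 - (t : ℂ) * I) / 2) * (A + rho ^ 4 * B + rho ^ 2 * C) := by
    subst hA hB hC
    rw [hr2, hr4, ht_def]
    push_cast
    linear_combination ((2 * (q : ℂ) - 1) * (B - C) / 4) * hu
  have h1mt : (1 : ℂ) - (t : ℂ) * I ≠ 0 := by
    intro h
    have := congrArg Complex.re h
    simp at this
  have h1pt : (1 : ℂ) + (t : ℂ) * I ≠ 0 := by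
    intro h
    have := congrArg Complex.re h
    simp at this
  have hsq : Real.sqrt (1 + t ^ 2) ≠ 0 := by
    positivity
  have hsqC : ((Real.sqrt (1 + t ^ 2) : ℝ) : ℂ) ≠ 0 := by
    exact_mod_cast Complex.ofReal_ne_zero.mpr hsq
  have hsq2 : ((Real.sqrt (1 + t ^ 2) : ℝ) : ℂ) ^ 2 = 1 + (t : ℂ) ^ 2 := by
    rw [← Complex.ofReal_pow, Real.sq_sqrt (by positivity : (0:ℝ) ≤ 1 + t ^ 2)]
    push_cast; ring
  have hexp : Complex.exp (((2 * Real.arctan t : ℝ) : ℂ) * I) =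
      (1 + (t : ℂ) * I) / (1 - (t : ℂ) * I) := by
    have harg : ((2 * Real.arctan t : ℝ) : ℂ) * I =
        ((Real.arctan t : ℝ) : ℂ) * I + ((Real.arctan t : ℝ) : ℂ) * I := by
      push_cast; ring
    have hhalf : Complex.exp (((Real.arctan t : ℝ) : ℂ) * I) =
        (1 + (t : ℂ) * I) / ((Real.sqrt (1 + t ^ 2) : ℝ) : ℂ) := by
      rw [Complex.exp_mul_I, ← Complex.ofReal_cos, ← Complex.ofReal_sin,
        Real.cos_arctan, Real.sin_arctan]
      push_cast
      field_simp
    rw [harg, Complex.exp_add, hhalf]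
    rw [div_mul_div_comm]
    rw [div_eq_div_iff (by exact mul_ne_zero hsqC hsqC) h1mt]
    have : ((Real.sqrt (1 + t ^ 2) : ℝ) : ℂ) * ((Real.sqrt (1 + t ^ 2) : ℝ) : ℂ) =
        1 + (t : ℂ) ^ 2 := by rw [← sq]; exact hsq2
    rw [this]
    linear_combination (-(t:ℂ)^2 * (1 + (t:ℂ)*I)) * Complex.I_sq
  have hDne : A + rho ^ 4 * B + rho ^ 2 * C ≠ 0 := hden
  have hmu' : (-(1 - (t : ℂ) * I) / 2) ≠ 0 := by
    simp only [neg_div, neg_ne_zero, div_ne_zero_iff]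
    exact ⟨h1mt, by norm_num⟩
  have hmain : (A'' + rho ^ 2 * B'' + rho ^ 4 * C'') / (A'' + rho ^ 4 * B'' + rho ^ 2 * C'') =
      Complex.exp (((2 * Real.arctan t : ℝ) : ℂ) * I) *
        ((A + rho ^ 2 * B + rho ^ 4 * C) / (A + rho ^ 4 * B + rho ^ 2 * C)) := by
    rw [hN, hD, hexp, mul_div_mul_comm]
    congr 1
    rw [div_eq_div_iff hmu' h1mt]
    ring
  refine ⟨hmain, ?_⟩
  rw [hmain, norm_mul, Complex.norm_exp_ofReal_mul_I, one_mul]
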